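/- Chain LP bound, case of cheapest positive edge excluded: For a chain of length k ≥ 3 with positive weights a_1, …, a_{k−1} on consecutive edges and weight −b (b > 0) on the edge (1, k), if min(a_1, …, a_{k−1}) ≤ b, then every LP-feasible point x on k vertices satisfies ∑_{i=1}^{k−1} a_i · x(i, i+1) − b · x(1, k) ≤ ∑_{i=1}^{k−1} a_i − min(a_1, …, a_{k−1}). -/

import Mathlib

open Finset

/-- An LP-feasible point: symmetric, entries in `[0,1]`, satisfying the triangle
inequalities of the LP relaxation of the clique partitioning ILP. -/
def LPFeasible {n : ℕ} (x : Fin n → Fin n → ℝ) : Prop :=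
  (∀ i j, x i j = x j i) ∧
  (∀ i j : Fin n, i < j → 0 ≤ x i j ∧ x i j ≤ 1) ∧
  (∀ i j k : Fin n, i < j → j < k →
    x i j + x j k - x i k ≤ 1 ∧ x i j - x j k + x i k ≤ 1 ∧ -x i j + x j k + x i k ≤ 1)

/-- LP objective value `∑_{i<j} w i j * x i j`. -/
noncomputable def lpObj {n : ℕ} (w x : Fin n → Fin n → ℝ) : ℝ :=
  ∑ i : Fin n, ∑ j : Fin n, if i < j then w i j * x i j else 0

private lemma chain_path_ineq (k : ℕ) (hk : 3 ≤ k) (x : Fin k → Fin k → ℝ)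
    (hx : LPFeasible x) :
    ∀ j, 1 ≤ j → ∀ hj : j < k,
      ∑ i ∈ Finset.range j, (if h : i + 1 < k then x ⟨i, by omega⟩ ⟨i + 1, h⟩ else 0)
        ≤ x ⟨0, by omega⟩ ⟨j, hj⟩ + (j : ℝ) - 1 := by
  intro j hj1
  induction j, hj1 using Nat.le_induction with
  | base =>
    intro hj
    rw [Finset.sum_range_one, dif_pos hj]
    simp
  | succ j hj1 ih =>
    intro hj
    have hjk : j < k := by omega
    have tri := (hx.2.2 ⟨0, by omega⟩ ⟨j, hjk⟩ ⟨j + 1, hj⟩ (by simpa using (show 0 < j by omega))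
      (by simp [Fin.lt_def])).1
    have := ih hjk
    rw [Finset.sum_range_succ, dif_pos hj]
    push_cast
    linarith

/-- **Chain LP bound, cheapest-positive-edge case.** For a chain of length `k ≥ 3`
with positive weights `a 0, …, a (k-2)` on consecutive edges and weight `-b`
(`b > 0`) on the edge `(0, k-1)`, if `min (a 0, …, a (k-2)) ≤ b`, then every
LP-feasible point `x` satisfies
`∑ i, a i * x(i, i+1) - b * x(0, k-1) ≤ ∑ i, a i - min (a 0, …, a (k-2))`. -/
theorem chain_LP_bound_positive_edge (k : ℕ) (hk : 3 ≤ k) (a : ℕ → ℝ) (b : ℝ)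
    (ha : ∀ i, i < k - 1 → 0 < a i) (hb : 0 < b)
    (hmin : (Finset.range (k - 1)).inf' (Finset.nonempty_range_iff.mpr (by omega)) a ≤ b)
    (x : Fin k → Fin k → ℝ) (hx : LPFeasible x) :
    (∑ i : Fin (k - 1), a i.val *
        x ⟨i.val, by have := i.isLt; omega⟩ ⟨i.val + 1, by have := i.isLt; omega⟩)
      - b * x ⟨0, by omega⟩ ⟨k - 1, by omega⟩
    ≤ (∑ i ∈ Finset.range (k - 1), a i)
      - (Finset.range (k - 1)).inf' (Finset.nonempty_range_iff.mpr (by omega)) a := by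
  set m := (Finset.range (k - 1)).inf' (Finset.nonempty_range_iff.mpr (by omega)) a with hm
  set g : ℕ → ℝ := fun i => if h : i + 1 < k then x ⟨i, by omega⟩ ⟨i + 1, h⟩ else 0 with hg
  set X := x ⟨0, by omega⟩ ⟨k - 1, by omega⟩ with hX
  have hm_le : ∀ i, i < k - 1 → m ≤ a i := fun i hi =>
    Finset.inf'_le a (Finset.mem_range.mpr hi)
  have hm_pos : 0 < m := by
    obtain ⟨j, hj, hjm⟩ := Finset.exists_mem_eq_inf' (Finset.nonempty_range_iff.mpr
      (show k - 1 ≠ 0 by omega)) a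
    rw [hm, hjm]; exact ha j (Finset.mem_range.mp hj)
  have hgb : ∀ i, i < k - 1 → 0 ≤ g i ∧ g i ≤ 1 := by
    intro i hi
    have h1 : i + 1 < k := by omega
    simp only [hg, dif_pos h1]
    exact hx.2.1 _ _ (by simp [Fin.lt_def])
  have hXb : 0 ≤ X := (hx.2.1 _ _ (by simp [Fin.lt_def]; omega)).1
  have hsum : (∑ i : Fin (k - 1), a i.val *
        x ⟨i.val, by have := i.isLt; omega⟩ ⟨i.val + 1, by have := i.isLt; omega⟩)
      = ∑ i ∈ Finset.range (k - 1), a i * g i := by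
    rw [← Fin.sum_univ_eq_sum_range (fun i => a i * g i) (k - 1)]
    apply Finset.sum_congr rfl
    intro i _
    have h1 : i.val + 1 < k := by have := i.isLt; omega
    simp only [hg, dif_pos h1]
  have hpath : ∑ i ∈ Finset.range (k - 1), g i ≤ X + ((k : ℝ) - 1) - 1 := by
    have := chain_path_ineq k hk x hx (k - 1) (by omega) (by omega)
    have hc : ((k - 1 : ℕ) : ℝ) = (k : ℝ) - 1 := by
      have : (1 : ℕ) ≤ k := by omega
      push_cast [this]; ring
    rw [hc] at this
    exact this
  have h1 : ∑ i ∈ Finset.range (k - 1), a i * g i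
      ≤ ∑ i ∈ Finset.range (k - 1), ((a i - m) + m * g i) := by
    apply Finset.sum_le_sum
    intro i hi
    have hi' := Finset.mem_range.mp hi
    have := hgb i hi'
    have := hm_le i hi'
    nlinarith [this]
  have h2 : ∑ i ∈ Finset.range (k - 1), ((a i - m) + m * g i)
      = (∑ i ∈ Finset.range (k - 1), a i) - ((k : ℝ) - 1) * m
        + m * ∑ i ∈ Finset.range (k - 1), g i := by
    rw [Finset.sum_add_distrib, Finset.sum_sub_distrib, ← Finset.mul_sum,
      Finset.sum_const, Finset.card_range]
    have hc : ((k - 1 : ℕ) : ℝ) = (k : ℝ) - 1 := by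
      have : (1 : ℕ) ≤ k := by omega
      push_cast [this]; ring
    rw [nsmul_eq_mul, hc]
  rw [hsum]
  have hmul : m * ∑ i ∈ Finset.range (k - 1), g i ≤ m * (X + ((k : ℝ) - 1) - 1) :=
    mul_le_mul_of_nonneg_left hpath hm_pos.le
  nlinarith [mul_le_mul_of_nonneg_right hmin hXb]
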